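/- Let p be a prime, r ≥ 1 with p^r > 2, K the field with p^r elements, and G = SL₂(K). The K-subspace U of V_p(p^r) spanned by x^p and y^p is a K G-submodule of V_p(p^r); as F_p G-modules, U is isomorphic to V₁(p^r) and the quotient V_p(p^r)/U is isomorphic to V_{p−2}(p^r). -/

import Mathlib

open MvPolynomial Matrix

noncomputable section

/-- The substitution action of a `2 × 2` matrix `g = (a b; c d)` on polynomials in two
variables, sending `x ↦ a·x + b·y` and `y ↦ c·x + d·y`. -/
def polySub {K : Type*} [CommSemiring K] (g : Matrix (Fin 2) (Fin 2) K) :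
    MvPolynomial (Fin 2) K →ₐ[K] MvPolynomial (Fin 2) K :=
  MvPolynomial.aeval fun i => ∑ j, g i j • MvPolynomial.X j

lemma polySub_mul {K : Type*} [CommSemiring K] (g h : Matrix (Fin 2) (Fin 2) K) :
    polySub (g * h) = (polySub h).comp (polySub g) := by
  apply MvPolynomial.algHom_ext
  intro i
  simp only [polySub, MvPolynomial.aeval_X, AlgHom.coe_comp, Function.comp_apply, map_sum,
    _root_.map_smul, Matrix.mul_apply, Finset.sum_smul, smul_smul, Finset.smul_sum]
  rw [Finset.sum_comm]

lemma polySub_one {K : Type*} [CommSemiring K] :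
    polySub (1 : Matrix (Fin 2) (Fin 2) K) = AlgHom.id K _ := by
  apply MvPolynomial.algHom_ext
  intro i
  simp [polySub, Matrix.one_apply, ite_smul]

lemma polySub_mem {K : Type*} [CommSemiring K] (g : Matrix (Fin 2) (Fin 2) K) {n : ℕ}
    {f : MvPolynomial (Fin 2) K} (hf : f ∈ homogeneousSubmodule (Fin 2) K n) :
    polySub g f ∈ homogeneousSubmodule (Fin 2) K n := by
  rw [mem_homogeneousSubmodule] at hf ⊢
  have h1 : ∀ i : Fin 2, MvPolynomial.IsHomogeneous (∑ j, g i j • (MvPolynomial.X j : MvPolynomial (Fin 2) K)) 1 := by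
    intro i
    apply MvPolynomial.IsHomogeneous.sum
    intro j _
    rw [MvPolynomial.smul_eq_C_mul]
    exact (MvPolynomial.isHomogeneous_X K j).C_mul _
  have h2 := hf.aeval (fun i => ∑ j, g i j • (MvPolynomial.X j : MvPolynomial (Fin 2) K)) h1
  rw [one_mul] at h2
  exact h2

/-- The (left) representation of `SL₂(K)` on the space `V_n` of homogeneous polynomials of
degree `n` in two variables over `K`, viewed as a representation over a subring `R`
(e.g. `R = 𝔽_p`) by restriction of scalars.  It corresponds to the classical right action
`x · g = a·x + b·y`, `y · g = c·x + d·y` for `g = (a b; c d)`. -/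
def homPolyRep (K : Type*) [Field K] (R : Type*) [CommRing R] [Algebra R K] (n : ℕ) :
    Representation R (Matrix.SpecialLinearGroup (Fin 2) K)
      (homogeneousSubmodule (Fin 2) K n) where
  toFun g := LinearMap.restrictScalars R
    ((polySub ((g⁻¹ : Matrix.SpecialLinearGroup (Fin 2) K) : Matrix (Fin 2) (Fin 2) K)).toLinearMap.restrict
      (p := homogeneousSubmodule (Fin 2) K n) (q := homogeneousSubmodule (Fin 2) K n)
      (fun _ hx => polySub_mem _ hx))
  map_one' := by
    refine LinearMap.ext fun x => Subtype.ext ?_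
    simp [LinearMap.restrict_apply, polySub_one]
  map_mul' g h := by
    refine LinearMap.ext fun x => Subtype.ext ?_
    simp [LinearMap.restrict_apply, _root_.mul_inv_rev, polySub_mul]

/-- The `𝔽_p SL₂(pʳ)`-module `V_n(pʳ)` of `n`-homogeneous polynomials in two variables over
the field with `pʳ` elements, as a representation of `SL₂(pʳ)` over `𝔽_p = ZMod p`. -/
def Vrep (p r : ℕ) [Fact p.Prime] (n : ℕ) :
    Representation (ZMod p) (Matrix.SpecialLinearGroup (Fin 2) (GaloisField p r))
      (homogeneousSubmodule (Fin 2) (GaloisField p r) n) :=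
  homPolyRep (GaloisField p r) (ZMod p) n

/-- A representation `ρ` of `G` over `𝔽_p = ZMod p` *lifts along* a ring homomorphism
`f : R →+* ZMod p` if the matrix representation `θ : G →* GLₘ(𝔽_p)` attached to a basis of the
module admits a homomorphism `θ̂ : G →* GLₘ(R)` whose entrywise reduction along `f` is `θ`. -/
def LiftsAlong {p : ℕ} {G V : Type*} [Group G] [AddCommGroup V] [Module (ZMod p) V]
    (ρ : Representation (ZMod p) G V) (R : Type*) [CommRing R] (f : R →+* ZMod p) : Prop :=
  ∃ (m : ℕ) (b : Module.Basis (Fin m) (ZMod p) V) (θ : G →* Matrix.GeneralLinearGroup (Fin m) R),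
    ∀ g : G, ((θ g : Matrix (Fin m) (Fin m) R)).map f = LinearMap.toMatrix b b (ρ g)

/-- The `K`-subspace of `K[x,y]` spanned by `x^p` and `y^p`. -/
def Usub (p r : ℕ) [Fact p.Prime] :
    Submodule (GaloisField p r) (MvPolynomial (Fin 2) (GaloisField p r)) :=
  Submodule.span (GaloisField p r)
    {MvPolynomial.X 0 ^ p, MvPolynomial.X 1 ^ p}

lemma Usub_inv (p r : ℕ) [Fact p.Prime] (g : Matrix (Fin 2) (Fin 2) (GaloisField p r)) :
    ∀ f ∈ Usub p r, polySub g f ∈ Usub p r := by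
  intro f hf
  induction hf using Submodule.span_induction with
  | mem x hx =>
      have hmem : ∀ i : Fin 2, (polySub g (MvPolynomial.X i)) ^ p ∈ Usub p r := by
        intro i
        have hX : polySub g (MvPolynomial.X i) =
            g i 0 • MvPolynomial.X 0 + g i 1 • MvPolynomial.X 1 := by
          simp [polySub, Fin.sum_univ_two]
        rw [hX, add_pow_char, smul_pow, smul_pow]
        exact Submodule.add_mem _
          (Submodule.smul_mem _ _ (Submodule.subset_span (by simp)))
          (Submodule.smul_mem _ _ (Submodule.subset_span (by simp)))
      simp only [Set.mem_insert_iff, Set.mem_singleton_iff] at hx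
      rcases hx with rfl | rfl
      · simpa [map_pow] using hmem 0
      · simpa [map_pow] using hmem 1
  | zero => simp
  | add x y _ _ hx hy => rw [map_add]; exact Submodule.add_mem _ hx hy
  | smul c x _ hx => rw [_root_.map_smul]; exact Submodule.smul_mem _ _ hx

/-- The `𝔽_p`-representation of `SL₂(pʳ)` on `U = ⟨x^p, y^p⟩`. -/
def Urep (p r : ℕ) [Fact p.Prime] :
    Representation (ZMod p) (Matrix.SpecialLinearGroup (Fin 2) (GaloisField p r)) (Usub p r) where
  toFun g := LinearMap.restrictScalars (ZMod p)
    ((polySub ((g⁻¹ : Matrix.SpecialLinearGroup (Fin 2) (GaloisField p r)) :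
        Matrix (Fin 2) (Fin 2) (GaloisField p r))).toLinearMap.restrict
      (p := Usub p r) (q := Usub p r) (fun f hf => Usub_inv p r _ f hf))
  map_one' := by
    refine LinearMap.ext fun x => Subtype.ext ?_
    simp [LinearMap.restrict_apply, polySub_one]
  map_mul' g h := by
    refine LinearMap.ext fun x => Subtype.ext ?_
    simp [LinearMap.restrict_apply, _root_.mul_inv_rev, polySub_mul]

/-- `U = ⟨x^p, y^p⟩` regarded as an `𝔽_p`-submodule of `V_p(pʳ)`. -/
def UsubZ (p r : ℕ) [Fact p.Prime] :
    Submodule (ZMod p) (MvPolynomial.homogeneousSubmodule (Fin 2) (GaloisField p r) p) :=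
  Submodule.restrictScalars (ZMod p)
    ((Usub p r).comap (MvPolynomial.homogeneousSubmodule (Fin 2) (GaloisField p r) p).subtype)

lemma UsubZ_inv (p r : ℕ) [Fact p.Prime]
    (g : Matrix.SpecialLinearGroup (Fin 2) (GaloisField p r)) :
    UsubZ p r ≤ (UsubZ p r).comap (Vrep p r p g) := by
  intro x hx
  exact Usub_inv p r _ _ hx

/-- The quotient representation on the quotient by a `G`-invariant submodule. -/
def quotRep {R G M : Type*} [CommRing R] [Group G] [AddCommGroup M] [Module R M]
    (ρ : Representation R G M) (W : Submodule R M) (hW : ∀ g : G, W ≤ W.comap (ρ g)) :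
    Representation R G (M ⧸ W) where
  toFun g := W.mapQ W (ρ g) (hW g)
  map_one' := by
    refine Submodule.linearMap_qext _ ?_
    refine LinearMap.ext fun x => ?_
    simp [Submodule.mapQ_apply]
  map_mul' g h := by
    refine Submodule.linearMap_qext _ ?_
    refine LinearMap.ext fun x => ?_
    simp [Submodule.mapQ_apply]


/-! ### Auxiliary lemmas -/

section Aux

open Finsupp

lemma sub_single_add' {σ : Type*} [DecidableEq σ] (d : σ →₀ ℕ) (i : σ) (hi : d i ≠ 0) :
    (d - Finsupp.single i 1) + Finsupp.single i 1 = d := by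
  ext j
  simp only [Finsupp.add_apply, Finsupp.tsub_apply, Finsupp.single_apply]
  split_ifs with h
  · subst h; omega
  · omega

lemma Fin2.degree_eq (d : Fin 2 →₀ ℕ) : d.degree = d 0 + d 1 := by
  rw [Finsupp.degree_apply, Finset.sum_subset (Finset.subset_univ _)
    (by intro i _ hi; simpa using Finsupp.notMem_support_iff.mp hi), Fin.sum_univ_two]

lemma Fin2.finsupp_eq (d e : Fin 2 →₀ ℕ) (h0 : d 0 = e 0) (h1 : d 1 = e 1) : d = e := by
  ext j
  fin_cases j
  · exact h0
  · exact h1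

lemma fs00 : (Finsupp.single (0:Fin 2) (1:ℕ)) 0 = 1 := Finsupp.single_eq_same
lemma fs01 : (Finsupp.single (0:Fin 2) (1:ℕ)) 1 = 0 := Finsupp.single_eq_of_ne (by decide)
lemma fs10 : (Finsupp.single (1:Fin 2) (1:ℕ)) 0 = 0 := Finsupp.single_eq_of_ne (by decide)
lemma fs11 : (Finsupp.single (1:Fin 2) (1:ℕ)) 1 = 1 := Finsupp.single_eq_same

lemma isHomogeneous_coeff_degree {K : Type*} [CommSemiring K] {f : MvPolynomial (Fin 2) K}
    {n : ℕ} (hf : f.IsHomogeneous n) {d : Fin 2 →₀ ℕ} (hd : MvPolynomial.coeff d f ≠ 0) :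
    d.degree = n := by
  rw [Finsupp.degree_eq_weight_one]
  exact hf hd

lemma coeff_pderiv {K : Type*} [CommSemiring K] (i : Fin 2) (m : Fin 2 →₀ ℕ)
    (f : MvPolynomial (Fin 2) K) :
    coeff m (pderiv i f) = (m i + 1) * coeff (m + Finsupp.single i 1) f := by
  induction f using MvPolynomial.induction_on' with
  | monomial d c =>
      rw [pderiv_monomial]
      rw [coeff_monomial, coeff_monomial]
      split_ifs with h1 h2 h2
      · subst h2
        simp [Finsupp.add_apply, Finsupp.single_apply, mul_comm]
      · subst h1
        have hdi : d i = 0 := by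
          by_contra hne
          exact h2 ((sub_single_add' d i hne).symm)
        simp [hdi]
      · exact absurd (by simp [h2]) h1
      · ring
  | add f g hf hg =>
      simp [coeff_add, hf, hg]; ring

/-- The map `f ↦ (∂f/∂x)/y` (terms not divisible by `y` are discarded). -/
def Dmap (K : Type*) [CommSemiring K] :
    MvPolynomial (Fin 2) K →ₗ[K] MvPolynomial (Fin 2) K where
  toFun f := (pderiv 0 f).divMonomial (Finsupp.single 1 1)
  map_add' f g := by simp only [map_add, MvPolynomial.add_divMonomial]
  map_smul' c f := by
    ext m
    show coeff m ((pderiv 0 (c • f)).divMonomial (Finsupp.single 1 1)) =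
      coeff m (c • (pderiv 0 f).divMonomial (Finsupp.single 1 1))
    rw [coeff_smul, coeff_divMonomial, coeff_divMonomial, (pderiv (0:Fin 2)).map_smul,
      coeff_smul]

lemma coeff_Dmap {K : Type*} [CommSemiring K] (m : Fin 2 →₀ ℕ) (f : MvPolynomial (Fin 2) K) :
    coeff m (Dmap K f) = (m 0 + 1) *
      coeff (m + Finsupp.single 0 1 + Finsupp.single 1 1) f := by
  show coeff m ((pderiv 0 f).divMonomial (Finsupp.single 1 1)) = _
  rw [coeff_divMonomial, _root_.coeff_pderiv]
  congr 2
  · simp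
  · rw [add_comm (Finsupp.single 1 1) m, add_assoc, add_assoc,
      add_comm (Finsupp.single (1 : Fin 2) (1 : ℕ)) (Finsupp.single 0 1)]

lemma Dmap_isHomogeneous {K : Type*} [CommSemiring K] {f : MvPolynomial (Fin 2) K} {n : ℕ}
    (hf : f.IsHomogeneous n) : (Dmap K f).IsHomogeneous (n - 2) := by
  intro d hd
  rw [coeff_Dmap] at hd
  have h2 : coeff (d + Finsupp.single 0 1 + Finsupp.single 1 1) f ≠ 0 :=
    fun h => hd (by rw [h, mul_zero])
  have h3 := isHomogeneous_coeff_degree hf h2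
  rw [Fin2.degree_eq] at h3
  simp only [Finsupp.add_apply, fs00, fs01, fs10, fs11] at h3
  rw [show (weight 1 : (Fin 2 →₀ ℕ) →+ ℕ) = weight (fun _ ↦ 1) from rfl,
    ← Finsupp.degree_eq_weight_one, Fin2.degree_eq]
  omega

section CharPField

variable {p : ℕ} [Fact p.Prime] {K : Type*} [Field K] [CharP K p]

lemma cast_ne_zero_of_lt {n : ℕ} (h0 : n ≠ 0) (hn : n < p) : (n : K) ≠ 0 := by
  rw [Ne, CharP.cast_eq_zero_iff K p]
  intro hdvd
  exact absurd (Nat.le_of_dvd (Nat.pos_of_ne_zero h0) hdvd) (not_le.mpr hn)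

lemma X1_mul_Dmap {f : MvPolynomial (Fin 2) K} (hf : f.IsHomogeneous p) :
    X 1 * Dmap K f = pderiv 0 f := by
  ext m
  rw [coeff_X_mul', _root_.coeff_pderiv]
  split_ifs with h
  · have hm1 : m 1 ≠ 0 := Finsupp.mem_support_iff.mp h
    rw [coeff_Dmap]
    have he : m - Finsupp.single 1 1 + Finsupp.single 0 1 + Finsupp.single 1 1
        = m + Finsupp.single 0 1 := by
      rw [add_right_comm, sub_single_add' m 1 hm1]
    rw [he]
    congr 2
    rw [Finsupp.tsub_apply, fs10, Nat.sub_zero]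
  · have hm1 : m 1 = 0 := by simpa using h
    rcases eq_or_ne (coeff (m + Finsupp.single 0 1) f) 0 with hc | hc
    · rw [hc, mul_zero]
    · have h3 := isHomogeneous_coeff_degree hf hc
      rw [Fin2.degree_eq] at h3
      simp only [Finsupp.add_apply, fs00, fs01, fs10, fs11] at h3
      have : ((m 0 + 1 : ℕ) : K) = ((p : ℕ) : K) := by
        congr 1
        omega
      rw [Nat.cast_add, Nat.cast_one] at this
      rw [this, CharP.cast_eq_zero, zero_mul]

lemma X0_mul_Dmap {f : MvPolynomial (Fin 2) K} (hf : f.IsHomogeneous p) :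
    X 0 * Dmap K f = - pderiv 1 f := by
  ext m
  rw [coeff_X_mul', coeff_neg, _root_.coeff_pderiv]
  rcases eq_or_ne (coeff (m + Finsupp.single 1 1) f) 0 with hc | hc
  · rw [hc, mul_zero, neg_zero]
    split_ifs with h
    · rw [coeff_Dmap]
      have hm0 : m 0 ≠ 0 := Finsupp.mem_support_iff.mp h
      have he : m - Finsupp.single 0 1 + Finsupp.single 0 1 + Finsupp.single 1 1
          = m + Finsupp.single 1 1 := by
        rw [sub_single_add' m 0 hm0]
      rw [he, hc, mul_zero]
    · rfl
  · have h3 := isHomogeneous_coeff_degree hf hc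
    rw [Fin2.degree_eq] at h3
    simp only [Finsupp.add_apply, fs00, fs01, fs10, fs11] at h3
    split_ifs with h
    · have hm0 : m 0 ≠ 0 := Finsupp.mem_support_iff.mp h
      rw [coeff_Dmap]
      have he : m - Finsupp.single 0 1 + Finsupp.single 0 1 + Finsupp.single 1 1
          = m + Finsupp.single 1 1 := by
        rw [sub_single_add' m 0 hm0]
      rw [he]
      have h4 : (m - Finsupp.single 0 1 : Fin 2 →₀ ℕ) 0 + 1 = m 0 := by
        rw [Finsupp.tsub_apply, fs00]
        omega
      have h5 : ((m 0 : ℕ) : K) = -(((m 1 : ℕ) : K) + 1) := by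
        have hcast := congrArg (Nat.cast : ℕ → K) (show m 0 + (m 1 + 1) = p by omega)
        push_cast at hcast
        rw [CharP.cast_eq_zero K p] at hcast
        linear_combination hcast
      have h4K : (((m - Finsupp.single 0 1 : Fin 2 →₀ ℕ) 0 : ℕ) : K) = ((m 0 : ℕ) : K) - 1 := by
        have hcast := congrArg (Nat.cast : ℕ → K) h4
        rw [Nat.cast_add, Nat.cast_one] at hcast
        linear_combination hcast
      rw [h4K, h5]
      ring
    · have hm0 : m 0 = 0 := by simpa using h
      have h6 : ((m 1 + 1 : ℕ) : K) = 0 := by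
        rw [show m 1 + 1 = p by omega]
        exact CharP.cast_eq_zero K p
      rw [Nat.cast_add, Nat.cast_one] at h6
      rw [h6, zero_mul, neg_zero]

lemma pderiv_aeval_fin2 (s : Fin 2 → MvPolynomial (Fin 2) K) (i : Fin 2)
    (f : MvPolynomial (Fin 2) K) :
    pderiv i (aeval s f) = ∑ j, aeval s (pderiv j f) * pderiv i (s j) := by
  induction f using MvPolynomial.induction_on with
  | C a => simp
  | add f g hf hg =>
      simp only [map_add, add_mul, hf, hg, Finset.sum_add_distrib]
  | mul_X f j hf =>
      rw [_root_.map_mul, aeval_X, pderiv_mul, hf, Finset.sum_mul, Fin.sum_univ_two,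
        Fin.sum_univ_two]
      fin_cases j <;> simp only [Fin.zero_eta, Fin.mk_one, Fin.isValue]
      · rw [show (pderiv (0:Fin 2)) (f * X 0) = pderiv 0 f * X 0 + f by
            rw [pderiv_mul, pderiv_X_self, mul_one],
          show (pderiv (1:Fin 2)) (f * X 0) = pderiv 1 f * X 0 by
            rw [pderiv_mul, pderiv_X_of_ne (by decide), mul_zero, add_zero]]
        simp only [_root_.map_add, _root_.map_mul, aeval_X]
        ring
      · rw [show (pderiv (0:Fin 2)) (f * X 1) = pderiv 0 f * X 1 by
            rw [pderiv_mul, pderiv_X_of_ne (by decide), mul_zero, add_zero],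
          show (pderiv (1:Fin 2)) (f * X 1) = pderiv 1 f * X 1 + f by
            rw [pderiv_mul, pderiv_X_self, mul_one]]
        simp only [_root_.map_add, _root_.map_mul, aeval_X]
        ring

lemma Dmap_polySub (M : Matrix (Fin 2) (Fin 2) K) (hM : M.det = 1)
    {f : MvPolynomial (Fin 2) K} (hf : f.IsHomogeneous p) :
    Dmap K (polySub M f) = polySub M (Dmap K f) := by
  have hσf : (polySub M f).IsHomogeneous p := by
    have := polySub_mem M ((mem_homogeneousSubmodule _ _).mpr hf)
    exact (mem_homogeneousSubmodule _ _).mp this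
  have key : X 1 * Dmap K (polySub M f) = X 1 * polySub M (Dmap K f) := by
    rw [X1_mul_Dmap hσf]
    show pderiv 0 (aeval (fun i => ∑ j, M i j • X j) f) = _
    rw [pderiv_aeval_fin2]
    have hs : ∀ j : Fin 2, pderiv (0 : Fin 2)
        ((fun i => ∑ k, M i k • (X k : MvPolynomial (Fin 2) K)) j) = C (M j 0) := by
      intro j
      simp [Fin.sum_univ_two, smul_eq_C_mul, pderiv_X, Pi.single_apply]
    rw [Fin.sum_univ_two, hs 0, hs 1]
    have e0 : aeval (fun i => ∑ k, M i k • (X k : MvPolynomial (Fin 2) K)) (pderiv 0 f)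
        = polySub M (X 1 * Dmap K f) := by rw [← X1_mul_Dmap hf]; rfl
    have e1 : aeval (fun i => ∑ k, M i k • (X k : MvPolynomial (Fin 2) K)) (pderiv 1 f)
        = -polySub M (X 0 * Dmap K f) := by
      have : (pderiv (1:Fin 2)) f = -(X 0 * Dmap K f) := by
        rw [X0_mul_Dmap hf, neg_neg]
      rw [this]; simp only [map_neg]; rfl
    rw [e0, e1]
    simp only [_root_.map_mul, neg_mul]
    have hX0 : polySub M (X 0 : MvPolynomial (Fin 2) K) = C (M 0 0) * X 0 + C (M 0 1) * X 1 := by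
      simp [polySub, Fin.sum_univ_two, smul_eq_C_mul]
    have hX1 : polySub M (X 1 : MvPolynomial (Fin 2) K) = C (M 1 0) * X 0 + C (M 1 1) * X 1 := by
      simp [polySub, Fin.sum_univ_two, smul_eq_C_mul]
    rw [hX0, hX1]
    rw [Matrix.det_fin_two] at hM
    have hC : C (M 0 0) * C (M 1 1) - C (M 0 1) * C (M 1 0) = (1 : MvPolynomial (Fin 2) K) := by
      rw [← C_mul, ← C_mul, ← C_sub, hM, C_1]
    linear_combination (X 1 * polySub M (Dmap K f)) * hC
  exact mul_left_cancel₀ (X_ne_zero 1) key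

end CharPField

end Aux


/-! ### Main constructions -/

section Main

variable (p r : ℕ) [Fact p.Prime]

lemma Usub_le : Usub p r ≤ MvPolynomial.homogeneousSubmodule (Fin 2) (GaloisField p r) p := by
  rw [Usub, Submodule.span_le]
  rintro x hx
  simp only [Set.mem_insert_iff, Set.mem_singleton_iff] at hx
  rcases hx with rfl | rfl
  · exact (mem_homogeneousSubmodule _ _).mpr (isHomogeneous_X_pow 0 p)
  · exact (mem_homogeneousSubmodule _ _).mpr (isHomogeneous_X_pow 1 p)

lemma degree_one_eq {K : Type*} [CommSemiring K] {f : MvPolynomial (Fin 2) K}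
    (hf : f.IsHomogeneous 1) :
    f = C (coeff (Finsupp.single 0 1) f) * X 0 + C (coeff (Finsupp.single 1 1) f) * X 1 := by
  have hne10 : (Finsupp.single (1:Fin 2) (1:ℕ)) ≠ Finsupp.single 0 1 := by
    intro hcon
    have := congrArg (fun g : Fin 2 →₀ ℕ => g 1) hcon
    simp only [fs11, fs01] at this
    exact one_ne_zero this
  apply MvPolynomial.ext; intro d
  rw [coeff_add, coeff_C_mul, coeff_C_mul, coeff_X', coeff_X']
  by_cases h0 : (Finsupp.single (0:Fin 2) (1:ℕ)) = d
  · subst h0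
    rw [if_pos rfl, if_neg hne10]
    ring
  · by_cases h1 : (Finsupp.single (1:Fin 2) (1:ℕ)) = d
    · subst h1
      rw [if_pos rfl, if_neg (fun hcon => hne10 hcon.symm)]
      ring
    · rw [if_neg h0, if_neg h1, mul_zero, mul_zero, add_zero]
      by_contra hc
      have hdeg := isHomogeneous_coeff_degree hf hc
      rw [Fin2.degree_eq] at hdeg
      rcases Nat.eq_zero_or_pos (d 0) with hd0 | hd0
      · exact h1 (Fin2.finsupp_eq _ _ (by rw [fs10]; omega) (by rw [fs11]; omega)).symm
      · exact h0 (Fin2.finsupp_eq _ _ (by rw [fs00]; omega) (by rw [fs01]; omega)).symm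

lemma pow_mem_Usub {f : MvPolynomial (Fin 2) (GaloisField p r)}
    (hf : f.IsHomogeneous 1) : f ^ p ∈ Usub p r := by
  rw [degree_one_eq hf, add_pow_char, mul_pow, mul_pow, ← C_pow, ← C_pow,
    ← smul_eq_C_mul, ← smul_eq_C_mul]
  exact Submodule.add_mem _
    (Submodule.smul_mem _ _ (Submodule.subset_span (by simp)))
    (Submodule.smul_mem _ _ (Submodule.subset_span (by simp)))

/-- The Frobenius map `V₁ → U`, `f ↦ f^p`. -/
def Phi : (MvPolynomial.homogeneousSubmodule (Fin 2) (GaloisField p r) 1) →ₗ[ZMod p]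
    Usub p r where
  toFun f := ⟨(f : MvPolynomial (Fin 2) (GaloisField p r)) ^ p,
    pow_mem_Usub p r ((mem_homogeneousSubmodule _ _).mp f.2)⟩
  map_add' f g := Subtype.ext (add_pow_char _ _ _)
  map_smul' c f := by
    apply Subtype.ext
    show ((c • f : MvPolynomial.homogeneousSubmodule (Fin 2) (GaloisField p r) 1) :
      MvPolynomial (Fin 2) (GaloisField p r)) ^ p = c • ((f : MvPolynomial (Fin 2) _) ^ p)
    rw [SetLike.val_smul_of_tower, ← algebraMap_smul (GaloisField p r) c
      (f : MvPolynomial (Fin 2) (GaloisField p r)), smul_pow, ← map_pow, ZMod.pow_card,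
      algebraMap_smul]

lemma Phi_bijective : Function.Bijective (Phi p r) := by
  have hp : p ≠ 0 := (Fact.out : p.Prime).ne_zero
  constructor
  · intro x y hxy
    apply Subtype.ext
    have h := congrArg Subtype.val hxy
    have h2 : ((x : MvPolynomial (Fin 2) (GaloisField p r)) - y) ^ p = 0 := by
      rw [sub_pow_char, sub_eq_zero]
      exact h
    rw [pow_eq_zero_iff hp, sub_eq_zero] at h2
    exact h2
  · rintro ⟨u, hu⟩
    have main : ∃ f ∈ MvPolynomial.homogeneousSubmodule (Fin 2) (GaloisField p r) 1,
        f ^ p = u := by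
      induction hu using Submodule.span_induction with
      | mem x hx =>
          simp only [Set.mem_insert_iff, Set.mem_singleton_iff] at hx
          rcases hx with rfl | rfl
          · exact ⟨X 0, (mem_homogeneousSubmodule _ _).mpr (isHomogeneous_X _ _), rfl⟩
          · exact ⟨X 1, (mem_homogeneousSubmodule _ _).mpr (isHomogeneous_X _ _), rfl⟩
      | zero => exact ⟨0, Submodule.zero_mem _, zero_pow hp⟩
      | add x y _ _ ihx ihy =>
          obtain ⟨f, hf, rfl⟩ := ihx
          obtain ⟨g, hg, rfl⟩ := ihy
          exact ⟨f + g, Submodule.add_mem _ hf hg, add_pow_char _ _ _⟩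
      | smul c x _ ihx =>
          obtain ⟨f, hf, rfl⟩ := ihx
          refine ⟨(frobeniusEquiv (GaloisField p r) p).symm c • f,
            Submodule.smul_mem _ _ hf, ?_⟩
          rw [smul_pow, frobeniusEquiv_symm_pow_p]
    obtain ⟨f, hf, hfp⟩ := main
    exact ⟨⟨f, hf⟩, Subtype.ext hfp⟩

/-- The `𝔽_p`-linear map `V_p → V_{p-2}` induced by `Dmap`. -/
def DVmap : (MvPolynomial.homogeneousSubmodule (Fin 2) (GaloisField p r) p) →ₗ[ZMod p]
    (MvPolynomial.homogeneousSubmodule (Fin 2) (GaloisField p r) (p - 2)) :=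
  LinearMap.restrictScalars (ZMod p) ((Dmap (GaloisField p r)).restrict
    (p := MvPolynomial.homogeneousSubmodule (Fin 2) (GaloisField p r) p)
    (q := MvPolynomial.homogeneousSubmodule (Fin 2) (GaloisField p r) (p - 2))
    (fun x hx => (mem_homogeneousSubmodule _ _).mpr
      (Dmap_isHomogeneous ((mem_homogeneousSubmodule _ _).mp hx))))

lemma Dmap_eq_zero_iff {f : MvPolynomial (Fin 2) (GaloisField p r)}
    (hf : f.IsHomogeneous p) : Dmap (GaloisField p r) f = 0 ↔ f ∈ Usub p r := by
  have hp2 : 2 ≤ p := (Fact.out : p.Prime).two_le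
  constructor
  · intro h
    have key : ∀ d : Fin 2 →₀ ℕ, coeff d f ≠ 0 →
        d = Finsupp.single 0 p ∨ d = Finsupp.single 1 p := by
      intro d hd
      have hdeg := isHomogeneous_coeff_degree hf hd
      rw [Fin2.degree_eq] at hdeg
      by_contra hcon
      push_neg at hcon
      have hd0 : d 0 ≠ 0 := by
        intro h0
        exact hcon.2 (Fin2.finsupp_eq _ _
          (by rw [Finsupp.single_eq_of_ne' (by decide : (1:Fin 2) ≠ 0)]; omega)
          (by rw [Finsupp.single_eq_same]; omega))
      have hd1 : d 1 ≠ 0 := by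
        intro h1
        exact hcon.1 (Fin2.finsupp_eq _ _
          (by rw [Finsupp.single_eq_same]; omega)
          (by rw [Finsupp.single_eq_of_ne' (by decide : (0:Fin 2) ≠ 1)]; omega))
      set m : Fin 2 →₀ ℕ := d - Finsupp.single 0 1 - Finsupp.single 1 1 with hm
      have hmd : m + Finsupp.single 0 1 + Finsupp.single 1 1 = d := by
        apply Fin2.finsupp_eq
        · simp only [Finsupp.add_apply, fs00, fs10, hm, Finsupp.tsub_apply, fs01]
          omega
        · simp only [Finsupp.add_apply, fs01, fs11, hm, Finsupp.tsub_apply, fs10, fs11]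
          omega
      have hcoeff : coeff m (Dmap (GaloisField p r) f) = 0 := by rw [h, coeff_zero]
      rw [coeff_Dmap, hmd] at hcoeff
      have hm0 : m 0 + 1 = d 0 := by
        simp only [hm, Finsupp.tsub_apply, fs00, fs10]
        omega
      have hcast : ((m 0 : ℕ) : GaloisField p r) + 1 ≠ 0 := by
        have := cast_ne_zero_of_lt (p := p) (K := GaloisField p r)
          (n := m 0 + 1) (by omega) (by omega)
        rwa [Nat.cast_add, Nat.cast_one] at this
      exact hd (by
        rcases mul_eq_zero.mp hcoeff with hc | hc
        · exact absurd hc hcast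
        · exact hc)
    have hdecomp : f = coeff (Finsupp.single 0 p) f • ((X 0 : MvPolynomial (Fin 2) _) ^ p)
        + coeff (Finsupp.single 1 p) f • ((X 1 : MvPolynomial (Fin 2) _) ^ p) := by
      have hne : (Finsupp.single (1:Fin 2) p) ≠ Finsupp.single 0 p := by
        intro hcon
        have := congrArg (fun g : Fin 2 →₀ ℕ => g 1) hcon
        simp only [Finsupp.single_eq_same,
          Finsupp.single_eq_of_ne' (by decide : (0:Fin 2) ≠ 1)] at this
        omega
      apply MvPolynomial.ext; intro d
      rw [coeff_add, coeff_smul, coeff_smul, X_pow_eq_monomial, X_pow_eq_monomial,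
        coeff_monomial, coeff_monomial]
      by_cases h0 : (Finsupp.single (0:Fin 2) p) = d
      · subst h0
        rw [if_pos rfl, if_neg hne, smul_eq_mul, smul_eq_mul]
        ring
      · by_cases h1 : (Finsupp.single (1:Fin 2) p) = d
        · subst h1
          rw [if_pos rfl, if_neg (fun hcon => hne hcon.symm), smul_eq_mul, smul_eq_mul]
          ring
        · rw [if_neg h0, if_neg h1, smul_zero, smul_zero, add_zero]
          by_contra hc
          rcases key d hc with rfl | rfl
          · exact h0 rfl
          · exact h1 rfl
    rw [hdecomp]
    exact Submodule.add_mem _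
      (Submodule.smul_mem _ _ (Submodule.subset_span (by simp)))
      (Submodule.smul_mem _ _ (Submodule.subset_span (by simp)))
  · intro hfU
    have hker : Usub p r ≤ LinearMap.ker (Dmap (GaloisField p r)) := by
      rw [Usub, Submodule.span_le]
      rintro x hx
      simp only [Set.mem_insert_iff, Set.mem_singleton_iff] at hx
      rw [SetLike.mem_coe, LinearMap.mem_ker]
      rcases hx with rfl | rfl
      · ext m
        rw [coeff_Dmap, X_pow_eq_monomial, coeff_monomial, coeff_zero,
          if_neg (fun hcon => by
            have := congrArg (fun g : Fin 2 →₀ ℕ => g 1) hcon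
            simp only [Finsupp.single_eq_of_ne' (by decide : (0:Fin 2) ≠ 1),
              Finsupp.add_apply, fs01, fs11] at this
            omega), mul_zero]
      · ext m
        rw [coeff_Dmap, X_pow_eq_monomial, coeff_monomial, coeff_zero,
          if_neg (fun hcon => by
            have := congrArg (fun g : Fin 2 →₀ ℕ => g 0) hcon
            simp only [Finsupp.single_eq_of_ne' (by decide : (1:Fin 2) ≠ 0),
              Finsupp.add_apply, fs00, fs10] at this
            omega), mul_zero]
    exact LinearMap.mem_ker.mp (hker hfU)

lemma UsubZ_eq_ker : UsubZ p r = LinearMap.ker (DVmap p r) := by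
  ext x
  have hx := (mem_homogeneousSubmodule _ _).mp x.2
  constructor
  · intro hmem
    rw [LinearMap.mem_ker]
    apply Subtype.ext
    show Dmap (GaloisField p r) (x : MvPolynomial (Fin 2) (GaloisField p r)) = 0
    exact (Dmap_eq_zero_iff p r hx).mpr hmem
  · intro hmem
    rw [LinearMap.mem_ker] at hmem
    have : Dmap (GaloisField p r) (x : MvPolynomial (Fin 2) (GaloisField p r)) = 0 :=
      congrArg Subtype.val hmem
    exact (Dmap_eq_zero_iff p r hx).mp this

lemma DVmap_surjective : Function.Surjective (DVmap p r) := by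
  have hp2 : 2 ≤ p := (Fact.out : p.Prime).two_le
  rintro ⟨h, hh⟩
  have hh' := (mem_homogeneousSubmodule _ _).mp hh
  set c : (Fin 2 →₀ ℕ) → GaloisField p r :=
    fun d => (((d 0 + 1 : ℕ) : GaloisField p r))⁻¹ * coeff d h with hc
  set f : MvPolynomial (Fin 2) (GaloisField p r) :=
    ∑ d ∈ h.support, monomial (d + Finsupp.single 0 1 + Finsupp.single 1 1) (c d) with hfdef
  have hdegsup : ∀ d ∈ h.support, (d : Fin 2 →₀ ℕ).degree = p - 2 := fun d hd =>
    isHomogeneous_coeff_degree hh' (MvPolynomial.mem_support_iff.mp hd)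
  have hfhom : f.IsHomogeneous p := by
    apply MvPolynomial.IsHomogeneous.sum
    intro d hd
    apply isHomogeneous_monomial
    have := hdegsup d hd
    rw [Fin2.degree_eq] at this ⊢
    simp only [Finsupp.add_apply, fs00, fs01, fs10, fs11]
    omega
  refine ⟨⟨f, (mem_homogeneousSubmodule _ _).mpr hfhom⟩, Subtype.ext ?_⟩
  show Dmap (GaloisField p r) f = h
  ext m
  rw [coeff_Dmap, hfdef, MvPolynomial.coeff_sum]
  have hterm : ∀ d ∈ h.support,
      coeff (m + Finsupp.single 0 1 + Finsupp.single 1 1)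
        (monomial (d + Finsupp.single 0 1 + Finsupp.single 1 1) (c d))
      = if d = m then c d else 0 := by
    intro d _
    rw [coeff_monomial]
    by_cases hdm : d = m
    · subst hdm; rw [if_pos rfl, if_pos rfl]
    · rw [if_neg (fun hcon => hdm (by
        apply add_right_cancel (b := Finsupp.single (1:Fin 2) (1:ℕ))
        apply add_right_cancel (b := Finsupp.single (0:Fin 2) (1:ℕ))
        rw [add_right_comm, add_right_comm m]
        exact hcon)), if_neg hdm]
  rw [Finset.sum_congr rfl hterm, Finset.sum_ite_eq' h.support m c]
  by_cases hm : m ∈ h.support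
  · rw [if_pos hm, hc]
    have hne : ((m 0 + 1 : ℕ) : GaloisField p r) ≠ 0 := by
      apply cast_ne_zero_of_lt (p := p) (by omega)
      have := hdegsup m hm
      rw [Fin2.degree_eq] at this
      omega
    push_cast at hne ⊢
    rw [← mul_assoc, mul_inv_cancel₀ hne, one_mul]
  · rw [if_neg hm, mul_zero, eq_comm]
    exact MvPolynomial.notMem_support_iff.mp hm

end Main

/-- **Lemma (structure of `V_p(pʳ)`).** For `pʳ > 2`, the `K`-span `U` of `x^p, y^p` is an
`SL₂(K)`-invariant subspace of `V_p(pʳ)`; as `𝔽_p SL₂(pʳ)`-modules, `U ≅ V₁(pʳ)` and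
`V_p(pʳ)/U ≅ V_{p-2}(pʳ)`. -/
theorem Vp_structure (p r : ℕ) [Fact p.Prime] (hr : 1 ≤ r) (hpr : 2 < p ^ r) :
    (Usub p r ≤ MvPolynomial.homogeneousSubmodule (Fin 2) (GaloisField p r) p) ∧
    (∀ (g : Matrix.SpecialLinearGroup (Fin 2) (GaloisField p r))
        (f : MvPolynomial (Fin 2) (GaloisField p r)), f ∈ Usub p r →
        polySub (g : Matrix (Fin 2) (Fin 2) (GaloisField p r)) f ∈ Usub p r) ∧
    (∃ e : Usub p r ≃ₗ[ZMod p]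
        MvPolynomial.homogeneousSubmodule (Fin 2) (GaloisField p r) 1,
      ∀ g x, e (Urep p r g x) = Vrep p r 1 g (e x)) ∧
    (∃ e : ((MvPolynomial.homogeneousSubmodule (Fin 2) (GaloisField p r) p) ⧸ UsubZ p r)
        ≃ₗ[ZMod p] MvPolynomial.homogeneousSubmodule (Fin 2) (GaloisField p r) (p - 2),
      ∀ g x, e (quotRep (Vrep p r p) (UsubZ p r) (UsubZ_inv p r) g x) =
        Vrep p r (p - 2) g (e x)) := by
  refine ⟨Usub_le p r, fun g f hf => Usub_inv p r _ f hf, ?_, ?_⟩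
  · -- `U ≅ V₁` via Frobenius
    set E := LinearEquiv.ofBijective (Phi p r) (Phi_bijective p r) with hE
    refine ⟨E.symm, fun g x => ?_⟩
    have key : ∀ y, Urep p r g (E y) = E (Vrep p r 1 g y) := by
      intro y
      apply Subtype.ext
      show polySub ((g⁻¹ : Matrix.SpecialLinearGroup (Fin 2) (GaloisField p r)) :
          Matrix (Fin 2) (Fin 2) (GaloisField p r))
          ((y : MvPolynomial (Fin 2) (GaloisField p r)) ^ p)
        = (polySub ((g⁻¹ : Matrix.SpecialLinearGroup (Fin 2) (GaloisField p r)) :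
          Matrix (Fin 2) (Fin 2) (GaloisField p r)) (y : MvPolynomial (Fin 2) (GaloisField p r))) ^ p
      exact map_pow _ _ _
    calc E.symm (Urep p r g x)
        = E.symm (Urep p r g (E (E.symm x))) := by rw [E.apply_symm_apply]
      _ = E.symm (E (Vrep p r 1 g (E.symm x))) := by rw [key]
      _ = Vrep p r 1 g (E.symm x) := E.symm_apply_apply _
  · -- `V_p / U ≅ V_{p-2}` via `Dmap`
    have hle : UsubZ p r ≤ LinearMap.ker (DVmap p r) := (UsubZ_eq_ker p r).le
    set L := (UsubZ p r).liftQ (DVmap p r) hle with hL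
    have hker : LinearMap.ker L = ⊥ :=
      Submodule.ker_liftQ_eq_bot _ _ _ (UsubZ_eq_ker p r).ge
    have hbij : Function.Bijective L := by
      constructor
      · exact LinearMap.ker_eq_bot.mp hker
      · intro y
        obtain ⟨v, hv⟩ := DVmap_surjective p r y
        exact ⟨Submodule.Quotient.mk v, by rw [hL, Submodule.liftQ_apply]; exact hv⟩
    refine ⟨LinearEquiv.ofBijective L hbij, fun g x => ?_⟩
    obtain ⟨v, rfl⟩ := Submodule.Quotient.mk_surjective _ x
    have h1 : (quotRep (Vrep p r p) (UsubZ p r) (UsubZ_inv p r)) g (Submodule.Quotient.mk v)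
        = Submodule.Quotient.mk ((Vrep p r p) g v) := rfl
    have happ : ∀ w, (LinearEquiv.ofBijective L hbij) (Submodule.Quotient.mk w)
        = DVmap p r w := fun w => by
      rw [LinearEquiv.ofBijective_apply, hL, Submodule.liftQ_apply]
    rw [h1, happ, happ]
    apply Subtype.ext
    show Dmap (GaloisField p r) (polySub ((g⁻¹ : Matrix.SpecialLinearGroup (Fin 2)
        (GaloisField p r)) : Matrix (Fin 2) (Fin 2) (GaloisField p r))
        (v : MvPolynomial (Fin 2) (GaloisField p r)))
      = polySub ((g⁻¹ : Matrix.SpecialLinearGroup (Fin 2) (GaloisField p r)) :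
        Matrix (Fin 2) (Fin 2) (GaloisField p r))
        (Dmap (GaloisField p r) (v : MvPolynomial (Fin 2) (GaloisField p r)))
    exact Dmap_polySub _ (Matrix.SpecialLinearGroup.det_coe _)
      ((mem_homogeneousSubmodule _ _).mp v.2)
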